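/- Let Ω be a parabolic uniformly rectifiable domain and let γ, γ̃ denote the L² beta-number functions of ∂Ω and of a comparison boundary ∂Ω̃ respectively. Suppose E ⊂ ∂Ω̃ ∩ Δ_1(0,0) is closed with σ(Δ_1(0,0) \ E) small, {Q_i} is a parabolic Whitney decomposition of ℝ^{n+1} \ E with parabolic diameters r_i, and ξ(Q,τ,ρ) = {i : Q̄_i ∩ Δ_ρ(Q,τ) ≠ ∅}. Then for (Q,τ) ∈ E and 0 < ρ < 1/2: γ(Q,τ,ρ) ≤ c(n) ( γ̃(Q,τ, 3ρ/2) + Σ_{i ∈ ξ(Q,τ,ρ)} (r_i/ρ)^{n+3} ). -/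

import Mathlib

open MeasureTheory Real Set Filter Topology
open scoped ENNReal NNReal BigOperators

noncomputable section

abbrev Pt (n : ℕ) := EuclideanSpace ℝ (Fin n) × ℝ

/-- Real inner product on `ℝ^n`. -/
def ip {n : ℕ} (x y : EuclideanSpace ℝ (Fin n)) : ℝ := inner ℝ x y

/-- Parabolic distance between points of `ℝ^n × ℝ`. -/
def pdist {n : ℕ} (p q : Pt n) : ℝ := dist p.1 q.1 + Real.sqrt |p.2 - q.2|

/-- The parabolic cylinder of radius `R` centered at `c`. -/
def pcyl {n : ℕ} (c : Pt n) (R : ℝ) : Set (Pt n) :=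
  {p | dist p.1 c.1 < R ∧ |p.2 - c.2| < R ^ 2}

/-- `σm` is Ahlfors regular (of parabolic dimension `n+1`) on `∂Ω` with constant `M`. -/
def Ahlfors {n : ℕ} (σm : Measure (Pt n)) (Ω : Set (Pt n)) (M : ℝ) : Prop :=
  ∀ Q ∈ frontier Ω, ∀ R : ℝ, 0 < R →
    ENNReal.ofReal ((R / 2) ^ (n + 1)) ≤ σm (pcyl Q R ∩ frontier Ω) ∧
      σm (pcyl Q R ∩ frontier Ω) ≤ ENNReal.ofReal (M * R ^ (n + 1))

/-- The `L²` beta number `γ(p, r)` (extended-real valued): infimum over `n`-planes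
through `p` containing the time direction (encoded by their spatial unit normal) of the
normalized squared distance of `∂Ω ∩ C_r(p)` to the plane. -/
def gammaE {n : ℕ} (σm : Measure (Pt n)) (Ω : Set (Pt n)) (p : Pt n) (r : ℝ) : ℝ≥0∞ :=
  ⨅ ν : Metric.sphere (0 : EuclideanSpace ℝ (Fin n)) 1,
    (ENNReal.ofReal (r ^ (n + 3)))⁻¹ *
      ∫⁻ q in pcyl p r ∩ frontier Ω,
        ENNReal.ofReal ((ip (q.1 - p.1) (ν : EuclideanSpace ℝ (Fin n))) ^ 2) ∂σm

namespace S13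

variable {n : ℕ}

lemma pdist_nonneg (p q : Pt n) : 0 ≤ pdist p q :=
  add_nonneg dist_nonneg (Real.sqrt_nonneg _)

lemma dist_fst_le_pdist (p q : Pt n) : dist p.1 q.1 ≤ pdist p q :=
  le_add_of_nonneg_right (Real.sqrt_nonneg _)

lemma sqrt_snd_le_pdist (p q : Pt n) : Real.sqrt |p.2 - q.2| ≤ pdist p q :=
  le_add_of_nonneg_left dist_nonneg

lemma pdist_comm (p q : Pt n) : pdist p q = pdist q p := by
  unfold pdist; rw [dist_comm, abs_sub_comm]

lemma pdist_triangle (p q r : Pt n) : pdist p r ≤ pdist p q + pdist q r := by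
  have h1 : dist p.1 r.1 ≤ dist p.1 q.1 + dist q.1 r.1 := dist_triangle _ _ _
  have ha : (0:ℝ) ≤ Real.sqrt |p.2 - q.2| := Real.sqrt_nonneg _
  have hb : (0:ℝ) ≤ Real.sqrt |q.2 - r.2| := Real.sqrt_nonneg _
  have hsq1 : Real.sqrt |p.2 - q.2| ^ 2 = |p.2 - q.2| := Real.sq_sqrt (abs_nonneg _)
  have hsq2 : Real.sqrt |q.2 - r.2| ^ 2 = |q.2 - r.2| := Real.sq_sqrt (abs_nonneg _)
  have h2 : Real.sqrt |p.2 - r.2| ≤ Real.sqrt |p.2 - q.2| + Real.sqrt |q.2 - r.2| := by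
    have habs : |p.2 - r.2| ≤ (Real.sqrt |p.2 - q.2| + Real.sqrt |q.2 - r.2|) ^ 2 := by
      have := abs_sub_le p.2 q.2 r.2
      nlinarith [mul_nonneg ha hb]
    calc Real.sqrt |p.2 - r.2|
        ≤ Real.sqrt ((Real.sqrt |p.2 - q.2| + Real.sqrt |q.2 - r.2|) ^ 2) :=
          Real.sqrt_le_sqrt habs
      _ = _ := Real.sqrt_sq (by linarith)
  unfold pdist; linarith

lemma mem_pcyl_of_pdist_lt {p c : Pt n} {R : ℝ} (h : pdist p c < R) : p ∈ pcyl c R := by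
  have hR : 0 < R := lt_of_le_of_lt (pdist_nonneg _ _) h
  refine ⟨lt_of_le_of_lt (dist_fst_le_pdist _ _) h, ?_⟩
  have h2 : Real.sqrt |p.2 - c.2| < R := lt_of_le_of_lt (sqrt_snd_le_pdist _ _) h
  exact (Real.sqrt_lt' hR).mp h2

lemma pdist_lt_two_mul_of_mem_pcyl {p c : Pt n} {R : ℝ} (h : p ∈ pcyl c R) :
    pdist p c < 2 * R := by
  have hR : 0 < R := lt_of_le_of_lt dist_nonneg h.1
  have h2 : Real.sqrt |p.2 - c.2| < R := by
    rw [Real.sqrt_lt' hR]; exact h.2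
  unfold pdist; linarith [h.1]

lemma isOpen_pcyl (c : Pt n) (R : ℝ) : IsOpen (pcyl c R) := by
  have : pcyl c R = {p : Pt n | dist p.1 c.1 < R} ∩ {p : Pt n | |p.2 - c.2| < R ^ 2} := rfl
  rw [this]
  exact (isOpen_lt (continuous_fst.dist continuous_const) continuous_const).inter
    (isOpen_lt ((continuous_snd.sub continuous_const).abs) continuous_const)

lemma measurableSet_pcyl (c : Pt n) (R : ℝ) : MeasurableSet (pcyl c R) :=
  (isOpen_pcyl c R).measurableSet

lemma ofReal_inv_mul {a t : ℝ} (ha : 0 < a) :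
    (ENNReal.ofReal a)⁻¹ * ENNReal.ofReal (a * t) = ENNReal.ofReal t := by
  rw [ENNReal.ofReal_mul ha.le, ← mul_assoc,
    ENNReal.inv_mul_cancel (ENNReal.ofReal_pos.mpr ha).ne' ENNReal.ofReal_ne_top, one_mul]

lemma continuous_pdist2 : Continuous fun z : Pt n × Pt n => pdist z.1 z.2 := by
  unfold pdist
  exact ((continuous_fst.fst.dist continuous_snd.fst)).add
    (Real.continuous_sqrt.comp ((continuous_fst.snd.sub continuous_snd.snd).abs))

end S13

open S13

set_option maxHeartbeats 4000000 in
/-- comparison of beta numbers through a Whitney decomposition.  If the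
boundaries of `Ω` and of the comparison domain `Ω̃` (with Ahlfors regular surface
measures `σ`, `σ̃`) coincide, together with their surface measures, on a closed set
`E ⊆ Δ̃_1(0,0)`, and `{B i}` is a parabolic Whitney decomposition of the complement of
`E` with radii `rad i`, then for `(Q,τ) ∈ E` and `0 < ρ < 1/2`,
`γ(Q,τ,ρ) ≤ c(γ̃(Q,τ,3ρ/2) + Σ_{i ∈ ξ(Q,τ,ρ)} (rad i/ρ)^{n+3})`. -/
theorem statement13 (n : ℕ) (M : ℝ) (N : ℕ) (hM : 1 ≤ M) :
    ∃ c : ℝ, 0 < c ∧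
      ∀ (Ω Ωt : Set (Pt n)) (σm σt : Measure (Pt n)) (E : Set (Pt n))
        (ι : Type) (B : ι → Set (Pt n)) (rad : ι → ℝ),
        Ahlfors σm Ω M → Ahlfors σt Ωt M →
        IsClosed E → E ⊆ frontier Ω ∩ frontier Ωt →
        E ⊆ pcyl (0 : Pt n) 1 →
        (∀ A : Set (Pt n), A ⊆ E → σm A = σt A) →
        (∀ i, 0 < rad i) →
        (∀ i j, i ≠ j → Disjoint (B i) (B j)) →
        (∀ p : Pt n, p ∉ E → ∃ i, p ∈ closure (B i)) →
        (∀ i, ∀ p ∈ closure (B i), ∀ q ∈ closure (B i),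
          pdist p q ≤ 10 * ((n : ℝ) + 1) * rad i) →
        (∀ i, ∀ p ∈ closure (B i), ∀ q ∈ E, (10 : ℝ) ^ (5 * n) * rad i ≤ pdist p q) →
        (∀ i, ∃ p ∈ closure (B i), ∃ q ∈ E, pdist p q ≤ (10 : ℝ) ^ (10 * n) * rad i) →
        (∀ i, Set.ncard {j | (closure (B j) ∩ closure (B i)).Nonempty} ≤ N) →
        ∀ Q ∈ E, ∀ ρ : ℝ, 0 < ρ → ρ < 1 / 2 →
          gammaE σm Ω Q ρ ≤
            ENNReal.ofReal c *
              (gammaE σt Ωt Q (3 * ρ / 2) +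
                ∑' i : {i : ι // (closure (B i) ∩ (pcyl Q ρ ∩ frontier Ω)).Nonempty},
                  ENNReal.ofReal ((rad i / ρ) ^ (n + 3))) := by
  classical
  have hM0 : (0:ℝ) < M := lt_of_lt_of_le one_pos hM
  set K₀ : ℝ := 10 ^ (10 * n) + 10 * ((n : ℝ) + 1) with hK₀def
  have hK₀pos : 0 < K₀ := by positivity
  set c₂ : ℝ := M * (27 / 7) ^ (n + 1) with hc₂def
  set c₄ : ℝ := 2 * 16 ^ (n + 1) * c₂ with hc₄def
  set c₃ : ℝ := 1024 * K₀ ^ 2 * M * (20 * ((n : ℝ) + 1)) ^ (n + 1) with hc₃def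
  set c : ℝ := (1 + c₄) * (3 / 2) ^ (n + 3) + c₃ with hcdef
  have hc₂pos : 0 < c₂ := by positivity
  have hc₄pos : 0 < c₄ := by positivity
  have hc₃pos : 0 < c₃ := by positivity
  have hcpos : 0 < c := by positivity
  refine ⟨c, hcpos, ?_⟩
  intro Ω Ωt σm σt E ι B rad hAm hAt hEclosed hEsub hE1 hσeq hrad hdisj hcover hdiam
    hfarE hnearE hNC Q hQ ρ hρ hρhalf
  have hQΩ : Q ∈ frontier Ω := (hEsub hQ).1
  have hQΩt : Q ∈ frontier Ωt := (hEsub hQ).2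
  haveI hEne : Nonempty E := ⟨⟨Q, hQ⟩⟩
  set A : Set (Pt n) := pcyl Q ρ ∩ frontier Ω with hAdef
  set Big : Set (Pt n) := pcyl Q (3 * ρ / 2) ∩ frontier Ωt with hBigdef
  set d : ℝ≥0∞ := ∑' i : {i : ι // (closure (B i) ∩ A).Nonempty},
      ENNReal.ofReal ((rad i / ρ) ^ (n + 3)) with hddef
  have hcne0 : (ENNReal.ofReal c) ≠ 0 := (ENNReal.ofReal_pos.mpr hcpos).ne'
  by_cases hdtop : d = ⊤
  · rw [hdtop, add_top, ENNReal.mul_top hcne0]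
    exact le_top
  -- countability of the index subtype
  haveI hScount : Countable {i : ι // (closure (B i) ∩ A).Nonempty} := by
    rw [← Set.countable_univ_iff]
    have hcov : (Set.univ : Set {i : ι // (closure (B i) ∩ A).Nonempty}) ⊆
        ⋃ k : ℕ, {i : {i : ι // (closure (B i) ∩ A).Nonempty} |
          ((k : ℝ≥0∞))⁻¹ ≤ ENNReal.ofReal ((rad i / ρ) ^ (n + 3))} := by
      intro i _
      have hposi : (0:ℝ≥0∞) < ENNReal.ofReal ((rad i / ρ) ^ (n + 3)) := by
        apply ENNReal.ofReal_pos.mpr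
        have := hrad (i : ι); positivity
      obtain ⟨k, hk⟩ := ENNReal.exists_inv_nat_lt hposi.ne'
      exact Set.mem_iUnion.mpr ⟨k, hk.le⟩
    refine Set.Countable.mono hcov ?_
    refine Set.countable_iUnion fun k => Set.Finite.countable ?_
    refine ENNReal.finite_const_le_of_tsum_ne_top hdtop ?_
    simp
  -- measurability and finiteness
  have hAmeas : MeasurableSet A := (measurableSet_pcyl Q ρ).inter isClosed_frontier.measurableSet
  have hBigmeas : MeasurableSet Big :=
    (measurableSet_pcyl Q (3 * ρ / 2)).inter isClosed_frontier.measurableSet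
  have hAEmeas : MeasurableSet (A \ E) := hAmeas.diff hEclosed.measurableSet
  have hσmA : σm A ≤ ENNReal.ofReal (M * ρ ^ (n + 1)) := (hAm Q hQΩ ρ hρ).2
  haveI hfin1 : IsFiniteMeasure (σm.restrict (A \ E)) := by
    constructor
    rw [Measure.restrict_apply_univ]
    exact lt_of_le_of_lt (le_trans (measure_mono Set.diff_subset) hσmA) ENNReal.ofReal_lt_top
  haveI hfin2 : IsFiniteMeasure (σt.restrict Big) := by
    constructor
    rw [Measure.restrict_apply_univ]
    exact lt_of_le_of_lt (hAt Q hQΩt (3 * ρ / 2) (by linarith)).2 ENNReal.ofReal_lt_top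
  -- the key per-direction estimate
  have key : ∀ ν : Metric.sphere (0 : EuclideanSpace ℝ (Fin n)) 1,
      (ENNReal.ofReal (ρ ^ (n + 3)))⁻¹ *
        ∫⁻ q in A, ENNReal.ofReal ((ip (q.1 - Q.1) (ν : EuclideanSpace ℝ (Fin n))) ^ 2) ∂σm ≤
      ENNReal.ofReal c *
        ((ENNReal.ofReal ((3 * ρ / 2) ^ (n + 3)))⁻¹ *
          (∫⁻ q in Big, ENNReal.ofReal ((ip (q.1 - Q.1) (ν : EuclideanSpace ℝ (Fin n))) ^ 2) ∂σt)
          + d) := by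
    intro ν
    set νv : EuclideanSpace ℝ (Fin n) := (ν : EuclideanSpace ℝ (Fin n)) with hνvdef
    have hνnorm : ‖νv‖ = 1 := mem_sphere_zero_iff_norm.mp ν.2
    set g : Pt n → ℝ := fun x => |ip (x.1 - Q.1) νv| with hgdef
    set F : Pt n → ℝ≥0∞ := fun x => ENNReal.ofReal ((ip (x.1 - Q.1) νv) ^ 2) with hFdef
    show (ENNReal.ofReal (ρ ^ (n + 3)))⁻¹ * ∫⁻ q in A, F q ∂σm ≤
      ENNReal.ofReal c *
        ((ENNReal.ofReal ((3 * ρ / 2) ^ (n + 3)))⁻¹ * (∫⁻ q in Big, F q ∂σt) + d)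
    have hFg : ∀ x, F x = ENNReal.ofReal ((g x) ^ 2) := by
      intro x; rw [hFdef, hgdef]; simp [sq_abs]
    have hg0 : ∀ x, 0 ≤ g x := fun x => abs_nonneg _
    have hipcont : Continuous fun x : Pt n => ip (x.1 - Q.1) νv := by
      simp only [ip]
      exact (continuous_fst.sub continuous_const).inner continuous_const
    have hgcont : Continuous g := continuous_abs.comp hipcont
    have hFmeas : Measurable F :=
      ENNReal.measurable_ofReal.comp (hipcont.pow 2).measurable
    have hgdiff : ∀ x y : Pt n, |g x - g y| ≤ pdist x y := by
      intro x y
      have heq : ip (x.1 - Q.1) νv - ip (y.1 - Q.1) νv = ip (x.1 - y.1) νv := by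
        simp only [ip, ← inner_sub_left]
        congr 1
        abel
      have h1 : |ip (x.1 - Q.1) νv - ip (y.1 - Q.1) νv| ≤ dist x.1 y.1 := by
        rw [heq]
        calc |ip (x.1 - y.1) νv| ≤ ‖x.1 - y.1‖ * ‖νv‖ := abs_real_inner_le_norm _ _
          _ = dist x.1 y.1 := by rw [hνnorm, mul_one, dist_eq_norm]
      calc |g x - g y| ≤ |ip (x.1 - Q.1) νv - ip (y.1 - Q.1) νv| :=
            abs_abs_sub_abs_le_abs_sub _ _
        _ ≤ dist x.1 y.1 := h1
        _ ≤ pdist x y := dist_fst_le_pdist x y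
    have hgA : ∀ x ∈ A, g x < ρ := by
      intro x hx
      have h1 : g x ≤ ‖x.1 - Q.1‖ := by
        calc g x ≤ ‖x.1 - Q.1‖ * ‖νv‖ := abs_real_inner_le_norm _ _
          _ = ‖x.1 - Q.1‖ := by rw [hνnorm, mul_one]
      calc g x ≤ ‖x.1 - Q.1‖ := h1
        _ = dist x.1 Q.1 := (dist_eq_norm _ _).symm
        _ < ρ := hx.1.1
    set w : Pt n → ℝ≥0∞ := fun x => (ENNReal.ofReal ((g x / 8) ^ (n + 1)))⁻¹ with hwdef
    have hwmeas : Measurable w :=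
      (ENNReal.measurable_ofReal.comp ((hgcont.div_const 8).pow (n + 1)).measurable).inv
    set D' : Set (Pt n × Pt n) := {z | pdist z.1 z.2 < g z.1 / 8} with hD'def
    have hD'meas : MeasurableSet D' :=
      (isOpen_lt continuous_pdist2 ((hgcont.comp continuous_fst).div_const 8)).measurableSet
    set K : Pt n × Pt n → ℝ≥0∞ := D'.indicator (fun z => w z.1 * F z.2) with hKdef
    have hKmeas : Measurable K :=
      ((hwmeas.comp measurable_fst).mul (hFmeas.comp measurable_snd)).indicator hD'meas
    set φ : Pt n → ℝ := fun x => ⨅ q : E, pdist x (q : Pt n) with hφdef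
    have hφle : ∀ (x : Pt n) (q : Pt n), q ∈ E → φ x ≤ pdist x q := by
      intro x q hq
      exact ciInf_le ⟨0, by rintro v ⟨q', rfl⟩; exact pdist_nonneg _ _⟩ (⟨q, hq⟩ : E)
    have hφ0 : ∀ x, 0 ≤ φ x := fun x => le_ciInf fun q => pdist_nonneg _ _
    set Ψ : Pt n → ℝ≥0∞ := fun x => ∑' i : {i : ι // (closure (B i) ∩ A).Nonempty},
        (closure (B (i : ι))).indicator
          (fun _ => ENNReal.ofReal (1024 * K₀ ^ 2 * (rad (i : ι)) ^ 2)) x with hΨdef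
    have hΨmeas : Measurable Ψ :=
      Measurable.ennreal_tsum fun i => measurable_const.indicator isClosed_closure.measurableSet
    -- pointwise estimate on A \ E
    have hpoint : ∀ x ∈ A \ E,
        F x ≤ Ψ x + ENNReal.ofReal (2 * 16 ^ (n + 1)) * ∫⁻ y, K (x, y) ∂(σt.restrict Big) := by
      intro x hx
      rcases eq_or_lt_of_le (hg0 x) with hgx0 | hgx0
      · have hF0 : F x = 0 := by rw [hFg, ← hgx0]; simp
        rw [hF0]; exact zero_le
      rcases lt_or_ge (g x / 32) (φ x) with hnear | hfar
      · -- near case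
        obtain ⟨i₀, hi₀⟩ := hcover x hx.2
        have hi₀S : (closure (B i₀) ∩ A).Nonempty := ⟨x, hi₀, hx.1⟩
        obtain ⟨p, hp, q, hqE, hpq⟩ := hnearE i₀
        have h1 : pdist x q ≤ K₀ * rad i₀ := by
          calc pdist x q ≤ pdist x p + pdist p q := pdist_triangle _ _ _
            _ ≤ 10 * ((n : ℝ) + 1) * rad i₀ + 10 ^ (10 * n) * rad i₀ :=
                add_le_add (hdiam i₀ x hi₀ p hp) hpq
            _ = K₀ * rad i₀ := by rw [hK₀def]; ring
        have hφx : φ x ≤ K₀ * rad i₀ := le_trans (hφle x q hqE) h1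
        have hFx : F x ≤ ENNReal.ofReal (1024 * K₀ ^ 2 * (rad i₀) ^ 2) := by
          rw [hFg]
          apply ENNReal.ofReal_le_ofReal
          have h32 : g x ≤ 32 * (K₀ * rad i₀) := by linarith
          nlinarith [hg0 x, mul_le_mul h32 h32 (hg0 x) (by nlinarith [hK₀pos, hrad i₀])]
        have hterm : ENNReal.ofReal (1024 * K₀ ^ 2 * (rad i₀) ^ 2) ≤ Ψ x := by
          have hle := ENNReal.le_tsum
            (f := fun i : {i : ι // (closure (B i) ∩ A).Nonempty} =>
              (closure (B (i : ι))).indicator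
                (fun _ => ENNReal.ofReal (1024 * K₀ ^ 2 * (rad (i : ι)) ^ 2)) x) ⟨i₀, hi₀S⟩
          simpa [Set.indicator_of_mem hi₀] using hle
        exact le_trans (le_trans hFx hterm) le_self_add
      · -- far case
        have hφlt : φ x < g x / 16 := lt_of_le_of_lt hfar (by linarith)
        obtain ⟨qe, hqelt⟩ := exists_lt_of_ciInf_lt hφlt
        obtain ⟨q, hqE⟩ := qe
        have hq : pdist x q < g x / 16 := hqelt
        have hqΩt : q ∈ frontier Ωt := (hEsub hqE).2
        have hs8 : (0:ℝ) < g x / 8 / 8 := by linarith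
        have hYmeas : MeasurableSet (pcyl q (g x / 8 / 8) ∩ frontier Ωt) :=
          (measurableSet_pcyl _ _).inter isClosed_frontier.measurableSet
        have hsub : ∀ y ∈ pcyl q (g x / 8 / 8) ∩ frontier Ωt,
            (x, y) ∈ D' ∧ ENNReal.ofReal ((g x) ^ 2 / 2) ≤ F y ∧ y ∈ Big := by
          intro y hy
          have hyq : pdist y q < g x / 8 / 4 := by
            have h2 := pdist_lt_two_mul_of_mem_pcyl hy.1
            linarith
          have hxy : pdist x y < g x / 8 := by
            have h1 : pdist x y ≤ pdist x q + pdist q y := pdist_triangle _ _ _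
            rw [pdist_comm q y] at h1
            linarith
          have hgy : g x - g x / 8 ≤ g y := by
            have h3 := abs_le.mp (hgdiff x y)
            linarith [h3.1]
          refine ⟨hxy, ?_, ?_⟩
          · rw [hFg]
            apply ENNReal.ofReal_le_ofReal
            have h78 : (0:ℝ) ≤ g x - g x / 8 := by linarith
            nlinarith [mul_le_mul hgy hgy h78 (hg0 y)]
          · have hgxρ : g x < ρ := hgA x hx.1
            have hd1 : dist y.1 Q.1 < 3 * ρ / 2 := by
              have h4 : dist y.1 x.1 ≤ pdist y x := dist_fst_le_pdist y x
              have h4' : pdist y x = pdist x y := pdist_comm y x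
              have h5 : dist y.1 Q.1 ≤ dist y.1 x.1 + dist x.1 Q.1 := dist_triangle _ _ _
              have h6 : dist x.1 Q.1 < ρ := hx.1.1.1
              linarith
            have hd2 : |y.2 - Q.2| < (3 * ρ / 2) ^ 2 := by
              have h4 : |x.2 - y.2| < (g x / 8) ^ 2 := by
                have h5 : Real.sqrt |x.2 - y.2| < g x / 8 :=
                  lt_of_le_of_lt (sqrt_snd_le_pdist x y) hxy
                exact (Real.sqrt_lt' (by linarith)).mp h5
              have h6 : |x.2 - Q.2| < ρ ^ 2 := hx.1.1.2
              have h7 : |y.2 - Q.2| ≤ |y.2 - x.2| + |x.2 - Q.2| := abs_sub_le _ _ _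
              rw [abs_sub_comm y.2 x.2] at h7
              nlinarith [mul_le_mul hgxρ.le hgxρ.le (hg0 x) hρ.le]
            exact ⟨⟨hd1, hd2⟩, hy.2⟩
        have hYBig : pcyl q (g x / 8 / 8) ∩ frontier Ωt ⊆ Big := fun y hy => (hsub y hy).2.2
        have hσY : ENNReal.ofReal ((g x / 8 / 8 / 2) ^ (n + 1)) ≤
            σt (pcyl q (g x / 8 / 8) ∩ frontier Ωt) := (hAt q hqΩt (g x / 8 / 8) hs8).1
        have hIND : ∀ y, (pcyl q (g x / 8 / 8) ∩ frontier Ωt).indicator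
            (fun _ => w x * ENNReal.ofReal ((g x) ^ 2 / 2)) y ≤ K (x, y) := by
          intro y
          by_cases hy : y ∈ pcyl q (g x / 8 / 8) ∩ frontier Ωt
          · rw [Set.indicator_of_mem hy]
            obtain ⟨hxy, hFy, _⟩ := hsub y hy
            rw [hKdef, Set.indicator_of_mem hxy]
            exact mul_le_mul_right hFy _
          · rw [Set.indicator_of_notMem hy]; exact zero_le
        have hinner : (w x * ENNReal.ofReal ((g x) ^ 2 / 2)) *
            σt (pcyl q (g x / 8 / 8) ∩ frontier Ωt) ≤
            ∫⁻ y, K (x, y) ∂(σt.restrict Big) := by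
          have h1 : (∫⁻ y, (pcyl q (g x / 8 / 8) ∩ frontier Ωt).indicator
              (fun _ => w x * ENNReal.ofReal ((g x) ^ 2 / 2)) y ∂(σt.restrict Big)) ≤
              ∫⁻ y, K (x, y) ∂(σt.restrict Big) := lintegral_mono hIND
          rwa [lintegral_indicator_const hYmeas, Measure.restrict_apply hYmeas,
            Set.inter_eq_self_of_subset_left hYBig] at h1
        have hgx8pos : (0:ℝ) < (g x / 8) ^ (n + 1) := pow_pos (by linarith) _
        have hkey1 : w x * (ENNReal.ofReal ((g x) ^ 2 / 2) *
            ENNReal.ofReal ((g x / 8 / 8 / 2) ^ (n + 1)))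
            = ENNReal.ofReal ((1 / 16) ^ (n + 1) * ((g x) ^ 2 / 2)) := by
          rw [← ENNReal.ofReal_mul (by positivity)]
          have harith : (g x) ^ 2 / 2 * (g x / 8 / 8 / 2) ^ (n + 1)
              = (g x / 8) ^ (n + 1) * ((1 / 16) ^ (n + 1) * ((g x) ^ 2 / 2)) := by
            rw [show g x / 8 / 8 / 2 = (g x / 8) * (1 / 16) by ring, mul_pow]
            ring
          rw [harith, hwdef]
          exact ofReal_inv_mul (by linarith [hgx8pos])
        have hkey2 : F x = ENNReal.ofReal (2 * 16 ^ (n + 1)) *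
            ENNReal.ofReal ((1 / 16) ^ (n + 1) * ((g x) ^ 2 / 2)) := by
          rw [hFg, ← ENNReal.ofReal_mul (by positivity)]
          congr 1
          rw [div_pow, one_pow]
          have h16 : (0:ℝ) < 16 ^ (n + 1) := by positivity
          field_simp
        have hfinal : F x ≤ ENNReal.ofReal (2 * 16 ^ (n + 1)) *
            ∫⁻ y, K (x, y) ∂(σt.restrict Big) := by
          calc F x = ENNReal.ofReal (2 * 16 ^ (n + 1)) *
              (w x * (ENNReal.ofReal ((g x) ^ 2 / 2) *
                ENNReal.ofReal ((g x / 8 / 8 / 2) ^ (n + 1)))) := by rw [hkey1, ← hkey2]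
            _ ≤ ENNReal.ofReal (2 * 16 ^ (n + 1)) *
              (w x * (ENNReal.ofReal ((g x) ^ 2 / 2) *
                σt (pcyl q (g x / 8 / 8) ∩ frontier Ωt))) := by gcongr
            _ = ENNReal.ofReal (2 * 16 ^ (n + 1)) *
              ((w x * ENNReal.ofReal ((g x) ^ 2 / 2)) *
                σt (pcyl q (g x / 8 / 8) ∩ frontier Ωt)) := by rw [mul_assoc]
            _ ≤ _ := mul_le_mul_right hinner _
        exact le_trans hfinal le_add_self
    -- splitting the integral over A
    have hABsplit : (∫⁻ q in A, F q ∂σm) ≤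
        (∫⁻ q in A ∩ E, F q ∂σm) + ∫⁻ q in A \ E, F q ∂σm := by
      have h0 : σm.restrict A ≤ σm.restrict (A ∩ E) + σm.restrict (A \ E) := by
        have h1 : A = (A ∩ E) ∪ (A \ E) := (Set.inter_union_diff A E).symm
        calc σm.restrict A = σm.restrict ((A ∩ E) ∪ (A \ E)) := by rw [← h1]
          _ ≤ _ := Measure.restrict_union_le _ _
      calc (∫⁻ q in A, F q ∂σm)
          ≤ ∫⁻ q, F q ∂(σm.restrict (A ∩ E) + σm.restrict (A \ E)) :=
            lintegral_mono' h0 le_rfl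
        _ = _ := lintegral_add_measure _ _ _
    -- the E part
    have hB : (∫⁻ q in A ∩ E, F q ∂σm) ≤ ∫⁻ q in Big, F q ∂σt := by
      have hre : σm.restrict (A ∩ E) = σt.restrict (A ∩ E) := by
        ext s hs
        rw [Measure.restrict_apply hs, Measure.restrict_apply hs]
        exact hσeq _ (fun z hz => hz.2.2)
      have hsubBig : A ∩ E ⊆ Big := by
        rintro z ⟨⟨⟨hz1, hz2⟩, _⟩, hzE⟩
        exact ⟨⟨by linarith, by nlinarith⟩, (hEsub hzE).2⟩
      rw [hre]
      exact lintegral_mono' (Measure.restrict_mono hsubBig le_rfl) le_rfl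
    -- the near (Whitney) part
    have hΨtotal : (∫⁻ x in A \ E, Ψ x ∂σm) ≤
        ENNReal.ofReal c₃ * (ENNReal.ofReal (ρ ^ (n + 3)) * d) := by
      have htsum : (∫⁻ x in A \ E, Ψ x ∂σm)
          = ∑' i : {i : ι // (closure (B i) ∩ A).Nonempty},
              ∫⁻ x, (closure (B (i : ι))).indicator
                (fun _ => ENNReal.ofReal (1024 * K₀ ^ 2 * (rad (i : ι)) ^ 2)) x
                ∂(σm.restrict (A \ E)) :=
        lintegral_tsum fun i =>
          (measurable_const.indicator isClosed_closure.measurableSet).aemeasurable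
      rw [htsum]
      have hper : ∀ i : {i : ι // (closure (B i) ∩ A).Nonempty},
          (∫⁻ x, (closure (B (i : ι))).indicator
            (fun _ => ENNReal.ofReal (1024 * K₀ ^ 2 * (rad (i : ι)) ^ 2)) x
            ∂(σm.restrict (A \ E)))
          ≤ ENNReal.ofReal c₃ *
              (ENNReal.ofReal (ρ ^ (n + 3)) * ENNReal.ofReal ((rad (i : ι) / ρ) ^ (n + 3))) := by
        intro i
        rw [lintegral_indicator_const isClosed_closure.measurableSet,
          Measure.restrict_apply isClosed_closure.measurableSet]
        obtain ⟨x₀, hx₀c, hx₀A⟩ := i.2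
        have hradi := hrad (i : ι)
        have hsub2 : closure (B (i : ι)) ∩ (A \ E) ⊆
            pcyl x₀ (20 * ((n : ℝ) + 1) * rad (i : ι)) ∩ frontier Ω := by
          rintro z ⟨hzc, hzAE⟩
          refine ⟨mem_pcyl_of_pdist_lt ?_, hzAE.1.2⟩
          have h1 : pdist z x₀ ≤ 10 * ((n : ℝ) + 1) * rad (i : ι) := hdiam _ z hzc x₀ hx₀c
          nlinarith
        have hmb : σm (closure (B (i : ι)) ∩ (A \ E)) ≤
            ENNReal.ofReal (M * (20 * ((n : ℝ) + 1) * rad (i : ι)) ^ (n + 1)) :=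
          le_trans (measure_mono hsub2)
            (hAm x₀ hx₀A.2 (20 * ((n : ℝ) + 1) * rad (i : ι)) (by positivity)).2
        calc ENNReal.ofReal (1024 * K₀ ^ 2 * (rad (i : ι)) ^ 2) *
              σm (closure (B (i : ι)) ∩ (A \ E))
            ≤ ENNReal.ofReal (1024 * K₀ ^ 2 * (rad (i : ι)) ^ 2) *
              ENNReal.ofReal (M * (20 * ((n : ℝ) + 1) * rad (i : ι)) ^ (n + 1)) :=
              mul_le_mul_right hmb _
          _ = ENNReal.ofReal (c₃ * (ρ ^ (n + 3) * (rad (i : ι) / ρ) ^ (n + 3))) := by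
              rw [← ENNReal.ofReal_mul (by positivity)]
              congr 1
              rw [hc₃def, div_pow, mul_pow]
              have hρn : (0:ℝ) < ρ ^ (n + 3) := by positivity
              field_simp
              ring
          _ = ENNReal.ofReal c₃ *
              (ENNReal.ofReal (ρ ^ (n + 3)) * ENNReal.ofReal ((rad (i : ι) / ρ) ^ (n + 3))) := by
              rw [ENNReal.ofReal_mul (le_of_lt hc₃pos), ENNReal.ofReal_mul (by positivity),
                ENNReal.ofReal_mul (show (0:ℝ) ≤ ρ ^ (n + 3) by positivity)]
      calc (∑' i : {i : ι // (closure (B i) ∩ A).Nonempty}, _)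
          ≤ ∑' i : {i : ι // (closure (B i) ∩ A).Nonempty},
            ENNReal.ofReal c₃ *
              (ENNReal.ofReal (ρ ^ (n + 3)) * ENNReal.ofReal ((rad (i : ι) / ρ) ^ (n + 3))) :=
            ENNReal.tsum_le_tsum hper
        _ = ENNReal.ofReal c₃ * (ENNReal.ofReal (ρ ^ (n + 3)) * d) := by
            rw [hddef, ENNReal.tsum_mul_left, ENNReal.tsum_mul_left]
    -- the far part : inner integral bound
    have hinnerx : ∀ y, (∫⁻ x, K (x, y) ∂(σm.restrict (A \ E))) ≤ ENNReal.ofReal c₂ * F y := by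
      intro y
      by_cases hne : ({x : Pt n | pdist x y < g x / 8} ∩ (A \ E)).Nonempty
      · obtain ⟨x₀, hx₀X, hx₀AE⟩ := hne
        have hXmeas : MeasurableSet {x : Pt n | pdist x y < g x / 8} :=
          (isOpen_lt (continuous_pdist2.comp (continuous_id.prodMk continuous_const))
            (hgcont.div_const 8)).measurableSet
        have hx₀lt : pdist x₀ y < g x₀ / 8 := hx₀X
        have hgx₀pos : 0 < g x₀ := by
          have h0 := pdist_nonneg x₀ y
          linarith
        have h2' := abs_le.mp (hgdiff x₀ y)
        have hgy : 0 < g y := by linarith [h2'.1]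
        have hgx₀' : g x₀ < 8 / 7 * g y := by linarith [h2'.2]
        have hptle : ∀ x, K (x, y) ≤
            ({x : Pt n | pdist x y < g x / 8}.indicator
              (fun _ => (ENNReal.ofReal ((g y / 9) ^ (n + 1)))⁻¹) x) * F y := by
          intro x
          by_cases hxy : (x, y) ∈ D'
          · have hxX : x ∈ {x : Pt n | pdist x y < g x / 8} := hxy
            rw [hKdef, Set.indicator_of_mem hxy, Set.indicator_of_mem hxX]
            apply mul_le_mul_left
            have h1 : pdist x y < g x / 8 := hxy
            have h3 := abs_le.mp (hgdiff x y)
            have h89 : g y / 9 ≤ g x / 8 := by linarith [h3.1, pdist_nonneg x y]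
            exact ENNReal.inv_le_inv'
              (ENNReal.ofReal_le_ofReal (pow_le_pow_left₀ (by linarith) h89 _))
          · rw [hKdef, Set.indicator_of_notMem hxy]
            exact zero_le
        calc (∫⁻ x, K (x, y) ∂(σm.restrict (A \ E)))
            ≤ ∫⁻ x, ({x : Pt n | pdist x y < g x / 8}.indicator
                (fun _ => (ENNReal.ofReal ((g y / 9) ^ (n + 1)))⁻¹) x) * F y
                ∂(σm.restrict (A \ E)) := lintegral_mono hptle
          _ = (∫⁻ x, {x : Pt n | pdist x y < g x / 8}.indicator
                (fun _ => (ENNReal.ofReal ((g y / 9) ^ (n + 1)))⁻¹) x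
                ∂(σm.restrict (A \ E))) * F y :=
              lintegral_mul_const' _ _ ENNReal.ofReal_ne_top
          _ = ((ENNReal.ofReal ((g y / 9) ^ (n + 1)))⁻¹ *
                σm ({x : Pt n | pdist x y < g x / 8} ∩ (A \ E))) * F y := by
              rw [lintegral_indicator_const hXmeas, Measure.restrict_apply hXmeas]
          _ ≤ ((ENNReal.ofReal ((g y / 9) ^ (n + 1)))⁻¹ *
                ENNReal.ofReal (M * (3 * g y / 7) ^ (n + 1))) * F y := by
              have hsubX : {x : Pt n | pdist x y < g x / 8} ∩ (A \ E) ⊆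
                  pcyl x₀ (3 * g y / 7) ∩ frontier Ω := by
                rintro z ⟨hzX, hzAE⟩
                have hz1 : pdist z y < g z / 8 := hzX
                have h2z := abs_le.mp (hgdiff z y)
                have hgz : g z < 8 / 7 * g y := by linarith [h2z.2, pdist_nonneg z y]
                have hpd : pdist z x₀ < 3 * g y / 7 := by
                  calc pdist z x₀ ≤ pdist z y + pdist y x₀ := pdist_triangle _ _ _
                    _ = pdist z y + pdist x₀ y := by rw [pdist_comm y x₀]
                    _ < g z / 8 + g x₀ / 8 := by linarith
                    _ < 3 * g y / 7 := by linarith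
                exact ⟨mem_pcyl_of_pdist_lt hpd, hzAE.1.2⟩
              have hmb2 := le_trans (measure_mono hsubX)
                (hAm x₀ hx₀AE.1.2 (3 * g y / 7) (by linarith)).2
              exact mul_le_mul_left (mul_le_mul_right hmb2 _) _
          _ = ENNReal.ofReal c₂ * F y := by
              congr 1
              have hM37 : M * (3 * g y / 7) ^ (n + 1) = (g y / 9) ^ (n + 1) * c₂ := by
                rw [hc₂def, show (3 * g y / 7) = (g y / 9) * (27 / 7) by ring, mul_pow]
                ring
              rw [hM37]
              exact ofReal_inv_mul (pow_pos (by linarith) _)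
      · have hzero : ∀ᵐ x ∂(σm.restrict (A \ E)), K (x, y) = 0 := by
          filter_upwards [ae_restrict_mem hAEmeas] with x hx
          have hnot : (x, y) ∉ D' := fun hxy => hne ⟨x, hxy, hx⟩
          rw [hKdef, Set.indicator_of_notMem hnot]
        rw [lintegral_congr_ae hzero, lintegral_zero]
        exact zero_le
    -- swap
    have hswap : (∫⁻ x, (∫⁻ y, K (x, y) ∂(σt.restrict Big)) ∂(σm.restrict (A \ E)))
        = ∫⁻ y, (∫⁻ x, K (x, y) ∂(σm.restrict (A \ E))) ∂(σt.restrict Big) := by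
      apply lintegral_lintegral_swap
      have huncurry : Function.uncurry (fun x y : Pt n => K (x, y)) = K := by
        funext z; simp [Function.uncurry]
      rw [huncurry]
      exact hKmeas.aemeasurable
    have hfar_total : (∫⁻ x in A \ E,
          (ENNReal.ofReal (2 * 16 ^ (n + 1)) * ∫⁻ y, K (x, y) ∂(σt.restrict Big)) ∂σm)
        ≤ ENNReal.ofReal c₄ * ∫⁻ q in Big, F q ∂σt := by
      rw [lintegral_const_mul' _ _ ENNReal.ofReal_ne_top, hswap]
      have h1 : (∫⁻ y, (∫⁻ x, K (x, y) ∂(σm.restrict (A \ E))) ∂(σt.restrict Big))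
          ≤ ∫⁻ y, ENNReal.ofReal c₂ * F y ∂(σt.restrict Big) := lintegral_mono hinnerx
      rw [lintegral_const_mul' _ _ ENNReal.ofReal_ne_top] at h1
      calc ENNReal.ofReal (2 * 16 ^ (n + 1)) *
            ∫⁻ y, (∫⁻ x, K (x, y) ∂(σm.restrict (A \ E))) ∂(σt.restrict Big)
          ≤ ENNReal.ofReal (2 * 16 ^ (n + 1)) *
            (ENNReal.ofReal c₂ * ∫⁻ q in Big, F q ∂σt) := mul_le_mul_right h1 _
        _ = ENNReal.ofReal c₄ * ∫⁻ q in Big, F q ∂σt := by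
            rw [← mul_assoc, ← ENNReal.ofReal_mul (by positivity), hc₄def]
    -- put the A\E part together
    have hpoint' : ∀ᵐ x ∂(σm.restrict (A \ E)),
        F x ≤ Ψ x + ENNReal.ofReal (2 * 16 ^ (n + 1)) * ∫⁻ y, K (x, y) ∂(σt.restrict Big) := by
      filter_upwards [ae_restrict_mem hAEmeas] with x hx using hpoint x hx
    have hC : (∫⁻ x in A \ E, F x ∂σm) ≤
        ENNReal.ofReal c₃ * (ENNReal.ofReal (ρ ^ (n + 3)) * d) +
          ENNReal.ofReal c₄ * ∫⁻ q in Big, F q ∂σt := by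
      calc (∫⁻ x in A \ E, F x ∂σm)
          ≤ ∫⁻ x in A \ E, (Ψ x + ENNReal.ofReal (2 * 16 ^ (n + 1)) *
              ∫⁻ y, K (x, y) ∂(σt.restrict Big)) ∂σm := lintegral_mono_ae hpoint'
        _ = (∫⁻ x in A \ E, Ψ x ∂σm) + ∫⁻ x in A \ E,
              (ENNReal.ofReal (2 * 16 ^ (n + 1)) *
                ∫⁻ y, K (x, y) ∂(σt.restrict Big)) ∂σm := lintegral_add_left hΨmeas _
        _ ≤ _ := add_le_add hΨtotal hfar_total
    -- total
    have hall : (∫⁻ q in A, F q ∂σm) ≤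
        ENNReal.ofReal (1 + c₄) * (∫⁻ q in Big, F q ∂σt) +
          ENNReal.ofReal c₃ * (ENNReal.ofReal (ρ ^ (n + 3)) * d) := by
      calc (∫⁻ q in A, F q ∂σm)
          ≤ (∫⁻ q in A ∩ E, F q ∂σm) + ∫⁻ q in A \ E, F q ∂σm := hABsplit
        _ ≤ (∫⁻ q in Big, F q ∂σt) +
            (ENNReal.ofReal c₃ * (ENNReal.ofReal (ρ ^ (n + 3)) * d) +
              ENNReal.ofReal c₄ * ∫⁻ q in Big, F q ∂σt) := add_le_add hB hC
        _ = _ := by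
            rw [ENNReal.ofReal_add zero_le_one (le_of_lt hc₄pos), ENNReal.ofReal_one]
            ring
    -- normalize
    have hρpow : (0:ℝ) < ρ ^ (n + 3) := by positivity
    have hρne0 : ENNReal.ofReal (ρ ^ (n + 3)) ≠ 0 := (ENNReal.ofReal_pos.mpr hρpow).ne'
    have hmul := mul_le_mul_right hall ((ENNReal.ofReal (ρ ^ (n + 3)))⁻¹)
    have h2 : (ENNReal.ofReal (ρ ^ (n + 3)))⁻¹ *
        (ENNReal.ofReal c₃ * (ENNReal.ofReal (ρ ^ (n + 3)) * d)) = ENNReal.ofReal c₃ * d := by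
      calc (ENNReal.ofReal (ρ ^ (n + 3)))⁻¹ *
            (ENNReal.ofReal c₃ * (ENNReal.ofReal (ρ ^ (n + 3)) * d))
          = ENNReal.ofReal c₃ *
            (((ENNReal.ofReal (ρ ^ (n + 3)))⁻¹ * ENNReal.ofReal (ρ ^ (n + 3))) * d) := by ring
        _ = ENNReal.ofReal c₃ * d := by
            rw [ENNReal.inv_mul_cancel hρne0 ENNReal.ofReal_ne_top, one_mul]
    have h3 : (ENNReal.ofReal (ρ ^ (n + 3)))⁻¹ *
        (ENNReal.ofReal (1 + c₄) * (∫⁻ q in Big, F q ∂σt))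
        = ENNReal.ofReal ((1 + c₄) * (3 / 2) ^ (n + 3)) *
          ((ENNReal.ofReal ((3 * ρ / 2) ^ (n + 3)))⁻¹ * ∫⁻ q in Big, F q ∂σt) := by
      have hiden : (ENNReal.ofReal (ρ ^ (n + 3)))⁻¹
          = ENNReal.ofReal ((3 / 2) ^ (n + 3)) * (ENNReal.ofReal ((3 * ρ / 2) ^ (n + 3)))⁻¹ := by
        rw [← ENNReal.ofReal_inv_of_pos hρpow, ← ENNReal.ofReal_inv_of_pos (by positivity),
          ← ENNReal.ofReal_mul (by positivity)]
        congr 1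
        rw [show (3 * ρ / 2) = (3 / 2) * ρ by ring, mul_pow]
        have h32 : (0:ℝ) < (3 / 2 : ℝ) ^ (n + 3) := by positivity
        field_simp
      rw [hiden, ENNReal.ofReal_mul (by positivity)]
      ring
    have hcoef1 : (1 + c₄) * (3 / 2) ^ (n + 3) ≤ c := by
      rw [hcdef]; linarith
    have hcoef2 : c₃ ≤ c := by
      rw [hcdef]
      nlinarith [pow_pos (show (0:ℝ) < 3 / 2 by norm_num) (n + 3), hc₄pos]
    calc (ENNReal.ofReal (ρ ^ (n + 3)))⁻¹ * ∫⁻ q in A, F q ∂σm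
        ≤ (ENNReal.ofReal (ρ ^ (n + 3)))⁻¹ *
          (ENNReal.ofReal (1 + c₄) * (∫⁻ q in Big, F q ∂σt) +
            ENNReal.ofReal c₃ * (ENNReal.ofReal (ρ ^ (n + 3)) * d)) := hmul
      _ = ENNReal.ofReal ((1 + c₄) * (3 / 2) ^ (n + 3)) *
            ((ENNReal.ofReal ((3 * ρ / 2) ^ (n + 3)))⁻¹ * ∫⁻ q in Big, F q ∂σt) +
          ENNReal.ofReal c₃ * d := by rw [mul_add, h2, h3]
      _ ≤ ENNReal.ofReal c *
            ((ENNReal.ofReal ((3 * ρ / 2) ^ (n + 3)))⁻¹ * ∫⁻ q in Big, F q ∂σt) +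
          ENNReal.ofReal c * d := by
          gcongr <;> exact ENNReal.ofReal_le_ofReal (by assumption)
      _ = ENNReal.ofReal c *
          ((ENNReal.ofReal ((3 * ρ / 2) ^ (n + 3)))⁻¹ * (∫⁻ q in Big, F q ∂σt) + d) :=
          (mul_add _ _ _).symm

  -- conclude
  unfold gammaE
  by_cases hΓtop : (⨅ ν : Metric.sphere (0 : EuclideanSpace ℝ (Fin n)) 1,
      (ENNReal.ofReal ((3 * ρ / 2) ^ (n + 3)))⁻¹ *
        ∫⁻ q in pcyl Q (3 * ρ / 2) ∩ frontier Ωt,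
          ENNReal.ofReal ((ip (q.1 - Q.1) (ν : EuclideanSpace ℝ (Fin n))) ^ 2) ∂σt) = ⊤
  · rw [hΓtop, top_add, ENNReal.mul_top hcne0]
    exact le_top
  · refine ENNReal.le_of_forall_pos_le_add ?_
    intro ε hε _
    set ε' : ℝ≥0∞ := (ε : ℝ≥0∞) / ENNReal.ofReal c with hε'def
    have hε'0 : ε' ≠ 0 := by
      simp only [hε'def, ne_eq, ENNReal.div_eq_zero_iff, ENNReal.coe_eq_zero,
        ENNReal.ofReal_ne_top, or_false]
      exact_mod_cast hε.ne'
    have hlt : (⨅ ν : Metric.sphere (0 : EuclideanSpace ℝ (Fin n)) 1,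
        (ENNReal.ofReal ((3 * ρ / 2) ^ (n + 3)))⁻¹ *
          ∫⁻ q in pcyl Q (3 * ρ / 2) ∩ frontier Ωt,
            ENNReal.ofReal ((ip (q.1 - Q.1) (ν : EuclideanSpace ℝ (Fin n))) ^ 2) ∂σt) <
        (⨅ ν : Metric.sphere (0 : EuclideanSpace ℝ (Fin n)) 1,
        (ENNReal.ofReal ((3 * ρ / 2) ^ (n + 3)))⁻¹ *
          ∫⁻ q in pcyl Q (3 * ρ / 2) ∩ frontier Ωt,
            ENNReal.ofReal ((ip (q.1 - Q.1) (ν : EuclideanSpace ℝ (Fin n))) ^ 2) ∂σt) + ε' :=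
      ENNReal.lt_add_right hΓtop hε'0
    obtain ⟨ν, hν⟩ := iInf_lt_iff.mp hlt
    calc (⨅ ν : Metric.sphere (0 : EuclideanSpace ℝ (Fin n)) 1,
        (ENNReal.ofReal (ρ ^ (n + 3)))⁻¹ *
          ∫⁻ q in pcyl Q ρ ∩ frontier Ω,
            ENNReal.ofReal ((ip (q.1 - Q.1) (ν : EuclideanSpace ℝ (Fin n))) ^ 2) ∂σm)
        ≤ (ENNReal.ofReal (ρ ^ (n + 3)))⁻¹ *
          ∫⁻ q in pcyl Q ρ ∩ frontier Ω,
            ENNReal.ofReal ((ip (q.1 - Q.1) (ν : EuclideanSpace ℝ (Fin n))) ^ 2) ∂σm :=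
          iInf_le _ ν
      _ ≤ ENNReal.ofReal c *
          ((ENNReal.ofReal ((3 * ρ / 2) ^ (n + 3)))⁻¹ *
            (∫⁻ q in Big, ENNReal.ofReal ((ip (q.1 - Q.1) (ν : EuclideanSpace ℝ (Fin n))) ^ 2) ∂σt)
            + d) := key ν
      _ ≤ ENNReal.ofReal c *
          (((⨅ ν : Metric.sphere (0 : EuclideanSpace ℝ (Fin n)) 1,
            (ENNReal.ofReal ((3 * ρ / 2) ^ (n + 3)))⁻¹ *
              ∫⁻ q in pcyl Q (3 * ρ / 2) ∩ frontier Ωt,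
                ENNReal.ofReal ((ip (q.1 - Q.1) (ν : EuclideanSpace ℝ (Fin n))) ^ 2) ∂σt) + ε')
            + d) := by
          gcongr

      _ = ENNReal.ofReal c *
          ((⨅ ν : Metric.sphere (0 : EuclideanSpace ℝ (Fin n)) 1,
            (ENNReal.ofReal ((3 * ρ / 2) ^ (n + 3)))⁻¹ *
              ∫⁻ q in pcyl Q (3 * ρ / 2) ∩ frontier Ωt,
                ENNReal.ofReal ((ip (q.1 - Q.1) (ν : EuclideanSpace ℝ (Fin n))) ^ 2) ∂σt) + d)
          + ENNReal.ofReal c * ε' := by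
          rw [add_right_comm, mul_add]
      _ ≤ _ := by
          gcongr
          rw [hε'def, ENNReal.mul_div_cancel' (fun h => absurd h hcne0) (fun h => absurd h ENNReal.ofReal_ne_top)]
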